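/- Assume σ < 1/4 and (1/4 − σ)hₜ²α² ≤ 1, where α > 0 satisfies ⟨Aw, w⟩ ≤ α²⟨Bw, w⟩ for all w ∈ H (the borderline case ε₀ = 0). Then the solution v of the three-level method satisfies, for every m with 1 ≤ m ≤ M, (‖δ̄ₜv^m‖_B² + (σ − 1/4)hₜ²‖δ̄ₜv^m‖_A² + ‖s̄ₜv^m‖_A²)^{1/2} ≤ (‖v⁰‖_A² + ⟨(B + σhₜ²A)⁻¹u₁, u₁⟩)^{1/2} + 2hₜ Σ_{l=1}^{M−1} ⟨A⁻¹(δ̄ₜf)^l, (δ̄ₜf)^l⟩^{1/2} + 3 max_{0 ≤ m ≤ M−1} ⟨A⁻¹f^m, f^m⟩^{1/2}. -/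
import Mathlib

set_option maxHeartbeats 1000000

open scoped RealInnerProductSpace

lemma cs_psd {H : Type*} [NormedAddCommGroup H] [InnerProductSpace ℝ H]
    (P : H →ₗ[ℝ] H) (hsym : ∀ x y : H, ⟪P x, y⟫ = ⟪x, P y⟫)
    (hpsd : ∀ x : H, 0 ≤ ⟪P x, x⟫) (x y : H) :
    ⟪P x, y⟫ ≤ Real.sqrt ⟪P x, x⟫ * Real.sqrt ⟪P y, y⟫ := by
  have hyx : ⟪P y, x⟫ = ⟪P x, y⟫ := by rw [hsym, real_inner_comm]
  have hq : ∀ t : ℝ, 0 ≤ ⟪P y, y⟫ * (t*t) + (2*⟪P x, y⟫) * t + ⟪P x, x⟫ := by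
    intro t
    have := hpsd (x + t • y)
    simp only [map_add, map_smul, inner_add_left, inner_add_right, real_inner_smul_left,
      real_inner_smul_right] at this
    rw [hyx] at this
    nlinarith [this]
  have hd := discrim_le_zero hq
  rw [discrim] at hd
  have h1 : ⟪P x, y⟫^2 ≤ ⟪P x, x⟫ * ⟪P y, y⟫ := by nlinarith [hd]
  have h2 : ⟪P x, y⟫ ≤ Real.sqrt (⟪P x, x⟫ * ⟪P y, y⟫) := by
    calc ⟪P x, y⟫ ≤ |⟪P x, y⟫| := le_abs_self _
    _ = Real.sqrt (⟪P x, y⟫^2) := (Real.sqrt_sq_eq_abs _).symm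
    _ ≤ _ := Real.sqrt_le_sqrt h1
  rwa [Real.sqrt_mul (hpsd x)] at h2

lemma key_step {H : Type*} [NormedAddCommGroup H] [InnerProductSpace ℝ H]
    (B A : H →ₗ[ℝ] H)
    (hBsym : ∀ x y : H, ⟪B x, y⟫ = ⟪x, B y⟫)
    (hAsym : ∀ x y : H, ⟪A x, y⟫ = ⟪x, A y⟫)
    (h σ : ℝ) (hh : h ≠ 0) (a b c g : H)
    (hg : B ((h^2)⁻¹ • (c - (2:ℝ) • b + a)) + (σ * h^2) • A ((h^2)⁻¹ • (c - (2:ℝ) • b + a))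
      + A b = g) :
    (⟪B (h⁻¹ • (c - b)), h⁻¹ • (c - b)⟫ + (σ - 1/4) * h^2 * ⟪A (h⁻¹ • (c - b)), h⁻¹ • (c - b)⟫
      + ⟪A ((1/2:ℝ) • (b + c)), (1/2:ℝ) • (b + c)⟫)
    - (⟪B (h⁻¹ • (b - a)), h⁻¹ • (b - a)⟫ + (σ - 1/4) * h^2 * ⟪A (h⁻¹ • (b - a)), h⁻¹ • (b - a)⟫
      + ⟪A ((1/2:ℝ) • (a + b)), (1/2:ℝ) • (a + b)⟫)
    = 2 * ⟪g, (1/2:ℝ) • (b + c) - (1/2:ℝ) • (a + b)⟫ := by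
  have sBba : ⟪B b, a⟫ = ⟪B a, b⟫ := by rw [hBsym, real_inner_comm]
  have sBca : ⟪B c, a⟫ = ⟪B a, c⟫ := by rw [hBsym, real_inner_comm]
  have sBcb : ⟪B c, b⟫ = ⟪B b, c⟫ := by rw [hBsym, real_inner_comm]
  have sAba : ⟪A b, a⟫ = ⟪A a, b⟫ := by rw [hAsym, real_inner_comm]
  have sAca : ⟪A c, a⟫ = ⟪A a, c⟫ := by rw [hAsym, real_inner_comm]
  have sAcb : ⟪A c, b⟫ = ⟪A b, c⟫ := by rw [hAsym, real_inner_comm]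
  have sAab' : ∀ x y : H, ⟪x, A y⟫ = ⟪A y, x⟫ := fun x y => real_inner_comm _ _
  have sBab' : ∀ x y : H, ⟪x, B y⟫ = ⟪B y, x⟫ := fun x y => real_inner_comm _ _
  rw [← hg]
  simp only [map_add, map_sub, map_smul, inner_add_left, inner_add_right, inner_sub_left,
    inner_sub_right, real_inner_smul_left, real_inner_smul_right, inner_add_left, sAab', sBab']
  simp only [sBba, sBca, sBcb, sAba, sAca, sAcb]
  field_simp
  ring

lemma init_step {H : Type*} [NormedAddCommGroup H] [InnerProductSpace ℝ H]
    (B A Ci : H →ₗ[ℝ] H)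
    (hBsym : ∀ x y : H, ⟪B x, y⟫ = ⟪x, B y⟫)
    (hAsym : ∀ x y : H, ⟪A x, y⟫ = ⟪x, A y⟫)
    (h σ : ℝ) (hh : h ≠ 0)
    (hCi : ∀ x : H, B (Ci x) + (σ * h^2) • A (Ci x) = x)
    (v0 v1 u₁ f0 : H)
    (hinit : B (h⁻¹ • (v1 - v0)) + (σ * h^2) • A (h⁻¹ • (v1 - v0))
        + ((1/2) * h) • A v0 = u₁ + ((1/2) * h) • f0) :
    ⟪B (h⁻¹ • (v1 - v0)), h⁻¹ • (v1 - v0)⟫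
      + (σ - 1/4) * h^2 * ⟪A (h⁻¹ • (v1 - v0)), h⁻¹ • (v1 - v0)⟫
      + ⟪A ((1/2 : ℝ) • (v0 + v1)), (1/2 : ℝ) • (v0 + v1)⟫
    = ⟪A v0, v0⟫
      + ⟪Ci (u₁ + ((1/2) * h) • f0), u₁ + ((1/2) * h) • f0⟫
      - (h^2/4) * ⟪Ci (A v0), A v0⟫ := by
  set w1 : H := h⁻¹ • (v1 - v0) with hw1
  have hCsym : ∀ x y : H, ⟪B x + (σ * h^2) • A x, y⟫ = ⟪x, B y + (σ * h^2) • A y⟫ := by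
    intro x y
    simp only [inner_add_left, inner_add_right, real_inner_smul_left, real_inner_smul_right,
      hBsym, hAsym]
  have hCisym : ∀ x y : H, ⟪Ci x, y⟫ = ⟪x, Ci y⟫ := by
    intro x y
    calc ⟪Ci x, y⟫ = ⟪Ci x, B (Ci y) + (σ * h^2) • A (Ci y)⟫ := by rw [hCi]
    _ = ⟪B (Ci x) + (σ * h^2) • A (Ci x), Ci y⟫ := (hCsym _ _).symm
    _ = ⟪x, Ci y⟫ := by rw [hCi]
  set p : H := u₁ + ((1/2) * h) • f0 with hp
  set q : H := ((1/2) * h) • A v0 with hq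
  have hC : B w1 + (σ * h^2) • A w1 = p - q := by rw [← hinit]; abel
  have stepA : ⟪B w1, w1⟫ + (σ - 1/4) * h^2 * ⟪A w1, w1⟫
      + ⟪A ((1/2 : ℝ) • (v0 + v1)), (1/2 : ℝ) • (v0 + v1)⟫
      = ⟪A v0, v0⟫ + ⟪(B w1 + (σ * h^2) • A w1) + q + q, w1⟫ := by
    have sA : ∀ x y : H, ⟪x, A y⟫ = ⟪A y, x⟫ := fun x y => real_inner_comm _ _
    have sB : ∀ x y : H, ⟪x, B y⟫ = ⟪B y, x⟫ := fun x y => real_inner_comm _ _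
    have sAv : ⟪A v1, v0⟫ = ⟪A v0, v1⟫ := by rw [hAsym, real_inner_comm]
    rw [hw1, hq]
    simp only [map_add, map_sub, map_smul, inner_add_left, inner_add_right, inner_sub_left,
      inner_sub_right, real_inner_smul_left, real_inner_smul_right, sA, sB]
    simp only [sAv]
    field_simp
    ring
  rw [stepA, hC]
  have : (p - q) + q + q = p + q := by abel
  rw [this]
  have hcross : ⟪Ci q, p⟫ = ⟪Ci p, q⟫ := by rw [hCisym, real_inner_comm]
  have hqq : ⟪Ci q, q⟫ = (h^2/4) * ⟪Ci (A v0), A v0⟫ := by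
    rw [hq]
    simp only [map_smul, real_inner_smul_left, real_inner_smul_right]
    ring
  calc ⟪A v0, v0⟫ + ⟪p + q, w1⟫
      = ⟪A v0, v0⟫ + ⟪B (Ci (p + q)) + (σ * h^2) • A (Ci (p + q)), w1⟫ := by rw [hCi]
    _ = ⟪A v0, v0⟫ + ⟪Ci (p + q), B w1 + (σ * h^2) • A w1⟫ := by rw [hCsym]
    _ = ⟪A v0, v0⟫ + ⟪Ci (p + q), p - q⟫ := by rw [hC]
    _ = ⟪A v0, v0⟫ + ⟪Ci p, p⟫ - (h^2/4) * ⟪Ci (A v0), A v0⟫ := by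
        simp only [map_add, inner_add_left, inner_sub_right]
        rw [hcross, ← hqq]; ring

lemma gronwall (M : ℕ) (E g : ℕ → ℝ) (R K : ℝ)
    (hR : 0 ≤ R) (hK : 0 ≤ K) (hg : ∀ l, 0 ≤ g l)
    (h1 : E 1 ≤ (R + K)^2)
    (hrec : ∀ m, 2 ≤ m → m ≤ M →
      E m ≤ E 1 + 2*K*Real.sqrt (E 1) + 2*K*Real.sqrt (E m)
        + 2 * ∑ l ∈ Finset.Icc 2 (m-1), g l * Real.sqrt (E l)) :
    ∀ m, 1 ≤ m → m ≤ M →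
      Real.sqrt (E m) ≤ R + 3*K + 2 * ∑ l ∈ Finset.Icc 2 (m-1), g l := by
  have hF1 : Real.sqrt (E 1) ≤ R + K := by
    calc Real.sqrt (E 1) ≤ Real.sqrt ((R+K)^2) := Real.sqrt_le_sqrt h1
    _ = R + K := Real.sqrt_sq (by positivity)
  intro m
  induction m using Nat.strong_induction_on with
  | _ m ih =>
    intro hm1 hmM
    have hS0 : (0:ℝ) ≤ ∑ l ∈ Finset.Icc 2 (m-1), g l :=
      Finset.sum_nonneg (fun l _ => hg l)
    rcases eq_or_lt_of_le hm1 with h|h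
    · rw [← h]
      have : Finset.Icc 2 (1-1) = (∅ : Finset ℕ) := by decide
      rw [this]
      simp only [Finset.sum_empty]
      linarith
    · have h2m : 2 ≤ m := h
      set S := ∑ l ∈ Finset.Icc 2 (m-1), g l with hS
      have hG : ∀ l ∈ Finset.Icc 2 (m-1), Real.sqrt (E l) ≤ R + 3*K + 2*S := by
        intro l hl
        rw [Finset.mem_Icc] at hl
        have := ih l (by omega) (by omega) (by omega)
        refine this.trans ?_
        have hsub : ∑ i ∈ Finset.Icc 2 (l-1), g i ≤ S :=
          Finset.sum_le_sum_of_subset_of_nonneg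
            (Finset.Icc_subset_Icc le_rfl (by omega)) (fun i _ _ => hg i)
        linarith
      have hsum : ∑ l ∈ Finset.Icc 2 (m-1), g l * Real.sqrt (E l) ≤ S * (R+3*K+2*S) := by
        rw [hS, Finset.sum_mul]
        exact Finset.sum_le_sum (fun l hl =>
          mul_le_mul_of_nonneg_left (hG l hl) (hg l))
      have hEm := hrec m h2m hmM
      set F := Real.sqrt (E m) with hF
      have hF0 : 0 ≤ F := Real.sqrt_nonneg _
      rcases le_or_gt (E m) 0 with hneg|hpos
      · have : F = 0 := Real.sqrt_eq_zero'.mpr hneg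
        rw [this]; linarith
      · have hFsq : F^2 = E m := Real.sq_sqrt hpos.le
        have he1 : K * Real.sqrt (E 1) ≤ K * (R + K) :=
          mul_le_mul_of_nonneg_left hF1 hK
        have key : F^2 ≤ (R+K)^2 + 2*K*(R+K) + 2*K*F + 2*S*(R+3*K+2*S) := by
          nlinarith [hEm, hsum, h1, he1]
        nlinarith [key, hS0, hK, hR, hF0, mul_nonneg hS0 (add_nonneg hR hK)]

/-- the borderline (ε₀ = 0) strong energy stability bound for the symmetric
three-level method.  Here `Ai` is the inverse operator of `A` and `Ci` is the inverse
operator of `B + σhₜ²A`. -/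
theorem stmt_3
    {H : Type*} [NormedAddCommGroup H] [InnerProductSpace ℝ H] [FiniteDimensional ℝ H]
    (B A Ai Ci : H →ₗ[ℝ] H)
    (hBsym : ∀ x y : H, ⟪B x, y⟫ = ⟪x, B y⟫)
    (hBpos : ∀ x : H, x ≠ 0 → 0 < ⟪B x, x⟫)
    (hAsym : ∀ x y : H, ⟪A x, y⟫ = ⟪x, A y⟫)
    (hApos : ∀ x : H, x ≠ 0 → 0 < ⟪A x, x⟫)
    (hAi : ∀ x : H, A (Ai x) = x)
    (T : ℝ) (hT : 0 < T) (M : ℕ) (hM : 2 ≤ M) (ht : ℝ) (hht : ht = T / M)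
    (σ : ℝ) (hσ : σ < 1/4)
    (hCi : ∀ x : H, B (Ci x) + (σ * ht^2) • A (Ci x) = x)
    (α : ℝ) (hα : 0 < α)
    (hAB : ∀ w : H, ⟪A w, w⟫ ≤ α^2 * ⟪B w, w⟫)
    (hstab : (1/4 - σ) * ht^2 * α^2 ≤ 1)
    (v : ℕ → H) (u₁ : H) (f : ℕ → H)
    (heq : ∀ m : ℕ, 1 ≤ m → m ≤ M - 1 →
      B ((ht^2)⁻¹ • (v (m+1) - (2:ℝ) • v m + v (m-1)))
        + (σ * ht^2) • A ((ht^2)⁻¹ • (v (m+1) - (2:ℝ) • v m + v (m-1)))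
        + A (v m) = f m)
    (hinit : B (ht⁻¹ • (v 1 - v 0)) + (σ * ht^2) • A (ht⁻¹ • (v 1 - v 0))
        + ((1/2) * ht) • A (v 0) = u₁ + ((1/2) * ht) • f 0) :
    ∀ m : ℕ, 1 ≤ m → m ≤ M →
      Real.sqrt (⟪B (ht⁻¹ • (v m - v (m-1))), ht⁻¹ • (v m - v (m-1))⟫
          + (σ - 1/4) * ht^2 * ⟪A (ht⁻¹ • (v m - v (m-1))), ht⁻¹ • (v m - v (m-1))⟫
          + ⟪A ((1/2 : ℝ) • (v (m-1) + v m)), (1/2 : ℝ) • (v (m-1) + v m)⟫)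
      ≤ Real.sqrt (⟪A (v 0), v 0⟫ + ⟪Ci u₁, u₁⟫)
        + 2 * ht * ∑ l ∈ Finset.Icc 1 (M-1),
            Real.sqrt ⟪Ai (ht⁻¹ • (f l - f (l-1))), ht⁻¹ • (f l - f (l-1))⟫
        + 3 * (Finset.range M).sup' (Finset.nonempty_range_iff.mpr (by omega))
            (fun m => Real.sqrt ⟪Ai (f m), f m⟫) := by
  have hM0 : 0 < M := by omega
  have hMr : (0:ℝ) < (M:ℝ) := by exact_mod_cast hM0
  have hht0 : 0 < ht := by rw [hht]; exact div_pos hT hMr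
  have hhne : ht ≠ 0 := ne_of_gt hht0
  -- basic positivity facts
  have hApsd : ∀ x : H, 0 ≤ ⟪A x, x⟫ := by
    intro x
    rcases eq_or_ne x 0 with rfl|hx
    · simp
    · exact (hApos x hx).le
  have hBpsd : ∀ x : H, 0 ≤ ⟪B x, x⟫ := by
    intro x
    rcases eq_or_ne x 0 with rfl|hx
    · simp
    · exact (hBpos x hx).le
  have hD : ∀ x : H, 0 ≤ ⟪B x, x⟫ + (σ - 1/4) * ht^2 * ⟪A x, x⟫ := by
    intro x
    have h1 := hAB x
    have h2 := hBpsd x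
    have h3 := hApsd x
    have h4 : (0:ℝ) ≤ (1/4 - σ) * ht^2 := by nlinarith [sq_nonneg ht]
    nlinarith [mul_le_mul_of_nonneg_left h1 h4, mul_le_mul_of_nonneg_right hstab h2]
  have hAiA : ∀ x : H, ⟪A (Ai x), Ai x⟫ = ⟪Ai x, x⟫ := by
    intro x
    rw [hAi, real_inner_comm]
  have hAipsd : ∀ x : H, 0 ≤ ⟪Ai x, x⟫ := fun x => (hAiA x) ▸ hApsd (Ai x)
  have finner : ∀ x y : H, ⟪x, y⟫ ≤ Real.sqrt ⟪Ai x, x⟫ * Real.sqrt ⟪A y, y⟫ := by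
    intro x y
    have h0 := cs_psd A hAsym hApsd (Ai x) y
    rw [hAiA] at h0
    rw [hAi] at h0
    exact h0
  -- symmetry and positivity of Ci
  have hCsym : ∀ x y : H, ⟪B x + (σ * ht^2) • A x, y⟫ = ⟪x, B y + (σ * ht^2) • A y⟫ := by
    intro x y
    simp only [inner_add_left, inner_add_right, real_inner_smul_left, real_inner_smul_right,
      hBsym, hAsym]
  have hCisym : ∀ x y : H, ⟪Ci x, y⟫ = ⟪x, Ci y⟫ := by
    intro x y
    calc ⟪Ci x, y⟫ = ⟪Ci x, B (Ci y) + (σ * ht^2) • A (Ci y)⟫ := by rw [hCi]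
    _ = ⟪B (Ci x) + (σ * ht^2) • A (Ci x), Ci y⟫ := (hCsym _ _).symm
    _ = ⟪x, Ci y⟫ := by rw [hCi]
  have hCiq : ∀ x : H, ⟪Ci x, x⟫ = ⟪B (Ci x), Ci x⟫ + σ * ht^2 * ⟪A (Ci x), Ci x⟫ := by
    intro x
    calc ⟪Ci x, x⟫ = ⟪Ci x, B (Ci x) + (σ * ht^2) • A (Ci x)⟫ := by rw [hCi]
    _ = ⟪B (Ci x), Ci x⟫ + σ * ht^2 * ⟪A (Ci x), Ci x⟫ := by
        rw [inner_add_right, real_inner_smul_right, real_inner_comm (Ci x) (B (Ci x)),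
          real_inner_comm (Ci x) (A (Ci x))]
  have hCipsd : ∀ x : H, 0 ≤ ⟪Ci x, x⟫ := by
    intro x
    rw [hCiq x]
    have h1 := hD (Ci x)
    have h2 := hApsd (Ci x)
    nlinarith [mul_nonneg (sq_nonneg ht) h2]
  have hCiAi : ∀ x : H, ht^2 * ⟪Ci x, x⟫ ≤ 4 * ⟪Ai x, x⟫ := by
    intro x
    have ht2 : (0:ℝ) < ht^2 := by positivity
    have h1 : ⟪x, Ci x⟫ = ⟪B (Ci x), Ci x⟫ + σ * ht^2 * ⟪A (Ci x), Ci x⟫ := by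
      rw [real_inner_comm]; exact hCiq x
    have h2 : (ht^2/4) * ⟪A (Ci x), Ci x⟫ ≤ ⟪x, Ci x⟫ := by
      rw [h1]; linarith [hD (Ci x)]
    have h3 : ⟪x, Ci x⟫ ≤ Real.sqrt ⟪Ai x, x⟫ * Real.sqrt ⟪A (Ci x), Ci x⟫ := finner x (Ci x)
    have hAy := hApsd (Ci x)
    have hAix := hAipsd x
    have ht0' : 0 ≤ ⟪x, Ci x⟫ := le_trans (by nlinarith) h2
    have h4 : ⟪x, Ci x⟫^2 ≤ ⟪Ai x, x⟫ * ⟪A (Ci x), Ci x⟫ := by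
      have := mul_le_mul h3 h3 ht0' (by positivity)
      calc ⟪x, Ci x⟫^2 = ⟪x, Ci x⟫ * ⟪x, Ci x⟫ := sq (⟪x, Ci x⟫) ▸ (sq ⟪x, Ci x⟫).symm ▸ (by ring)
      _ ≤ (Real.sqrt ⟪Ai x, x⟫ * Real.sqrt ⟪A (Ci x), Ci x⟫) *
            (Real.sqrt ⟪Ai x, x⟫ * Real.sqrt ⟪A (Ci x), Ci x⟫) := this
      _ = ⟪Ai x, x⟫ * ⟪A (Ci x), Ci x⟫ := by
          rw [mul_mul_mul_comm, Real.mul_self_sqrt hAix, Real.mul_self_sqrt hAy]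
    have hcc : ⟪Ci x, x⟫ = ⟪x, Ci x⟫ := real_inner_comm _ _
    rw [hcc]
    rcases eq_or_lt_of_le ht0' with h0|h0
    · rw [← h0]; nlinarith [hAix]
    · nlinarith [h4, h2, hAix, mul_le_mul_of_nonneg_left h2 hAix]
  -- definitions
  set R := Real.sqrt (⟪A (v 0), v 0⟫ + ⟪Ci u₁, u₁⟫) with hRdef
  set K := (Finset.range M).sup' (Finset.nonempty_range_iff.mpr (by omega))
      (fun m => Real.sqrt ⟪Ai (f m), f m⟫) with hKdef
  set w : ℕ → H := fun m => ht⁻¹ • (v m - v (m-1)) with hwdef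
  set s : ℕ → H := fun m => (1/2 : ℝ) • (v (m-1) + v m) with hsdef
  set E : ℕ → ℝ := fun m => ⟪B (w m), w m⟫ + (σ - 1/4) * ht^2 * ⟪A (w m), w m⟫
      + ⟪A (s m), s m⟫ with hEdef
  set g : ℕ → ℝ := fun l => Real.sqrt ⟪Ai (f l - f (l-1)), f l - f (l-1)⟫ with hgdef
  have hR0 : 0 ≤ R := Real.sqrt_nonneg _
  have hKb : ∀ j, j < M → Real.sqrt ⟪Ai (f j), f j⟫ ≤ K := by
    intro j hj
    exact Finset.le_sup' (fun m => Real.sqrt ⟪Ai (f m), f m⟫) (Finset.mem_range.mpr hj)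
  have hK0 : 0 ≤ K := le_trans (Real.sqrt_nonneg _) (hKb 0 hM0)
  have hg0 : ∀ l, 0 ≤ g l := fun l => Real.sqrt_nonneg _
  -- E bounds
  have hsE : ∀ m, ⟪A (s m), s m⟫ ≤ E m := by
    intro m
    simp only [hEdef]
    linarith [hD (w m)]
  have hE0 : ∀ m, 0 ≤ E m := fun m => le_trans (hApsd (s m)) (hsE m)
  have hsF : ∀ m, Real.sqrt ⟪A (s m), s m⟫ ≤ Real.sqrt (E m) :=
    fun m => Real.sqrt_le_sqrt (hsE m)
  have hbound : ∀ (x : H) (m' : ℕ),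
      ⟪x, s m'⟫ ≤ Real.sqrt ⟪Ai x, x⟫ * Real.sqrt (E m') := by
    intro x m'
    exact (finner x (s m')).trans
      (mul_le_mul_of_nonneg_left (hsF m') (Real.sqrt_nonneg _))
  have hboundneg : ∀ (x : H) (m' : ℕ),
      -⟪x, s m'⟫ ≤ Real.sqrt ⟪Ai x, x⟫ * Real.sqrt (E m') := by
    intro x m'
    have := hbound (-x) m'
    simpa [inner_neg_left, map_neg, inner_neg_neg] using this
  -- the telescoping identity
  have hid : ∀ m, 2 ≤ m → m ≤ M →
      E m = E 1 + 2*⟪f (m-1), s m⟫ - 2*⟪f 1, s 1⟫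
        - 2 * ∑ l ∈ Finset.Icc 2 (m-1), ⟪f l - f (l-1), s l⟫ := by
    intro m hm2
    induction m, hm2 using Nat.le_induction with
    | base =>
      intro _
      have k1 := key_step B A hBsym hAsym ht σ hhne (v 0) (v 1) (v 2) (f 1)
        (heq 1 (by omega) (by omega))
      have hic : Finset.Icc 2 (2-1) = (∅ : Finset ℕ) := by decide
      rw [hic]
      simp only [Finset.sum_empty]
      have e2 : (2:ℕ) - 1 = 1 := by omega
      have e1 : (1:ℕ) - 1 = 0 := by omega
      simp only [hEdef, hwdef, hsdef, e2, e1]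
      rw [inner_sub_right] at k1
      linarith [k1]
    | succ n hn ih =>
      intro hn1M
      obtain ⟨k, rfl⟩ : ∃ k, n = k + 2 := ⟨n - 2, by omega⟩
      have ihh := ih (by omega)
      have kn := key_step B A hBsym hAsym ht σ hhne (v (k+1)) (v (k+2)) (v (k+3)) (f (k+2))
        (by
          have := heq (k+2) (by omega) (by omega)
          have e : (k+2) - 1 = k+1 := by omega
          rw [e] at this
          convert this using 3 <;> norm_num <;> ring_nf)
      have e3 : (k+2+1) - 1 = k+2 := by omega
      have e2 : (k+2) - 1 = k+1 := by omega
      have esum : ∑ l ∈ Finset.Icc 2 (k+2), ⟪f l - f (l-1), s l⟫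
          = (∑ l ∈ Finset.Icc 2 (k+1), ⟪f l - f (l-1), s l⟫) + ⟪f (k+2) - f (k+1), s (k+2)⟫ := by
        rw [Finset.sum_Icc_succ_top (by omega : 2 ≤ k+2)]
        norm_num
      have kn' : E (k+3) - E (k+2) = 2*⟪f (k+2), s (k+3)⟫ - 2*⟪f (k+2), s (k+2)⟫ := by
        have e4 : (k+3) - 1 = k+2 := by omega
        simp only [hEdef, hwdef, hsdef, e4, e2]
        rw [inner_sub_right] at kn
        have e5 : k+2+1 = k+3 := by omega
        rw [e5] at kn
        linarith [kn]
      have e7 : k+2-1 = k+1 := by omega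
      simp only [e7] at ihh
      simp only [e3]
      have e6 : k+2+1 = k+3 := by omega
      simp only [e6]
      rw [esum, inner_sub_left]
      linarith [kn', ihh]
  -- the recursion estimate
  have hrec : ∀ m, 2 ≤ m → m ≤ M →
      E m ≤ E 1 + 2*K*Real.sqrt (E 1) + 2*K*Real.sqrt (E m)
        + 2 * ∑ l ∈ Finset.Icc 2 (m-1), g l * Real.sqrt (E l) := by
    intro m hm2 hmM
    have hidm := hid m hm2 hmM
    have t1 : ⟪f (m-1), s m⟫ ≤ K * Real.sqrt (E m) := by
      refine (hbound (f (m-1)) m).trans ?_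
      exact mul_le_mul_of_nonneg_right (hKb (m-1) (by omega)) (Real.sqrt_nonneg _)
    have t2 : -⟪f 1, s 1⟫ ≤ K * Real.sqrt (E 1) := by
      refine (hboundneg (f 1) 1).trans ?_
      exact mul_le_mul_of_nonneg_right (hKb 1 (by omega)) (Real.sqrt_nonneg _)
    have t3 : -∑ l ∈ Finset.Icc 2 (m-1), ⟪f l - f (l-1), s l⟫
        ≤ ∑ l ∈ Finset.Icc 2 (m-1), g l * Real.sqrt (E l) := by
      rw [← Finset.sum_neg_distrib]
      exact Finset.sum_le_sum (fun l _ => hboundneg (f l - f (l-1)) l)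
    linarith [hidm, t1, t2, t3]
  -- initial energy bound
  have E1b : E 1 ≤ (R + K)^2 := by
    have i1 := init_step B A Ci hBsym hAsym ht σ hhne hCi (v 0) (v 1) u₁ (f 0) hinit
    have e1 : (1:ℕ) - 1 = 0 := by omega
    have hE1 : E 1 = ⟪A (v 0), v 0⟫
        + ⟪Ci (u₁ + ((1/2) * ht) • f 0), u₁ + ((1/2) * ht) • f 0⟫
        - (ht^2/4) * ⟪Ci (A (v 0)), A (v 0)⟫ := by
      simp only [hEdef, hwdef, hsdef, e1]
      exact i1
    set p : H := u₁ + ((1/2) * ht) • f 0 with hp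
    set q₀ : H := ((1/2) * ht) • f 0 with hq₀
    have tri : ⟪Ci p, p⟫ ≤ (Real.sqrt ⟪Ci u₁, u₁⟫ + Real.sqrt ⟪Ci q₀, q₀⟫)^2 := by
      have hcs := cs_psd Ci hCisym hCipsd u₁ q₀
      have hx : ⟪Ci p, p⟫ = ⟪Ci u₁, u₁⟫ + 2*⟪Ci u₁, q₀⟫ + ⟪Ci q₀, q₀⟫ := by
        have hcross : ⟪Ci q₀, u₁⟫ = ⟪Ci u₁, q₀⟫ := by rw [hCisym, real_inner_comm]
        rw [hp]
        simp only [map_add, inner_add_left, inner_add_right]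
        rw [hcross]; ring
      rw [hx]
      have s1 := Real.sq_sqrt (hCipsd u₁)
      have s2 := Real.sq_sqrt (hCipsd q₀)
      nlinarith [hcs, Real.sqrt_nonneg ⟪Ci u₁, u₁⟫, Real.sqrt_nonneg ⟪Ci q₀, q₀⟫]
    have q0b : ⟪Ci q₀, q₀⟫ ≤ ⟪Ai (f 0), f 0⟫ := by
      have hq : ⟪Ci q₀, q₀⟫ = (ht^2/4) * ⟪Ci (f 0), f 0⟫ := by
        rw [hq₀]
        simp only [map_smul, real_inner_smul_left, real_inner_smul_right]
        ring
      rw [hq]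
      linarith [hCiAi (f 0)]
    have sq0 : Real.sqrt ⟪Ci q₀, q₀⟫ ≤ K := by
      refine le_trans (Real.sqrt_le_sqrt q0b) (hKb 0 hM0)
    have su : Real.sqrt ⟪Ci u₁, u₁⟫ ≤ R := by
      rw [hRdef]
      exact Real.sqrt_le_sqrt (by linarith [hApsd (v 0)])
    have hRsq : R^2 = ⟪A (v 0), v 0⟫ + ⟪Ci u₁, u₁⟫ := by
      rw [hRdef]
      exact Real.sq_sqrt (by linarith [hApsd (v 0), hCipsd u₁])
    have hasq : (Real.sqrt ⟪Ci u₁, u₁⟫)^2 = ⟪Ci u₁, u₁⟫ := Real.sq_sqrt (hCipsd u₁)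
    have hqpos : 0 ≤ (ht^2/4) * ⟪Ci (A (v 0)), A (v 0)⟫ := by
      have := hCipsd (A (v 0))
      positivity
    have hab : Real.sqrt ⟪Ci u₁, u₁⟫ * Real.sqrt ⟪Ci q₀, q₀⟫ ≤ R * K :=
      mul_le_mul su sq0 (Real.sqrt_nonneg _) hR0
    have hbsq : (Real.sqrt ⟪Ci q₀, q₀⟫)^2 ≤ K^2 := by
      nlinarith [sq0, Real.sqrt_nonneg ⟪Ci q₀, q₀⟫]
    have tri' : ⟪Ci p, p⟫ ≤ (Real.sqrt ⟪Ci u₁, u₁⟫)^2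
        + 2*(Real.sqrt ⟪Ci u₁, u₁⟫ * Real.sqrt ⟪Ci q₀, q₀⟫) + (Real.sqrt ⟪Ci q₀, q₀⟫)^2 := by
      nlinarith [tri]
    clear_value R K E p q₀
    linarith [hE1, tri', hasq, hbsq, hab, hRsq, hqpos]
  -- apply the Gronwall lemma
  have main := gronwall M E g R K hR0 hK0 hg0 E1b hrec
  intro m hm1 hmM
  have hGm := main m hm1 hmM
  -- relate g to the scaled difference quotients
  have hgl : ∀ l, g l = ht * Real.sqrt ⟪Ai (ht⁻¹ • (f l - f (l-1))), ht⁻¹ • (f l - f (l-1))⟫ := by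
    intro l
    rw [hgdef]
    simp only [map_smul, real_inner_smul_left, real_inner_smul_right]
    rw [show ht⁻¹ * (ht⁻¹ * ⟪Ai (f l - f (l-1)), f l - f (l-1)⟫)
        = (ht⁻¹)^2 * ⟪Ai (f l - f (l-1)), f l - f (l-1)⟫ by ring]
    rw [Real.sqrt_mul (sq_nonneg _), Real.sqrt_sq (by positivity)]
    field_simp
  have hsub : ∑ l ∈ Finset.Icc 2 (m-1), g l ≤ ∑ l ∈ Finset.Icc 1 (M-1), g l :=
    Finset.sum_le_sum_of_subset_of_nonneg
      (Finset.Icc_subset_Icc (by omega) (by omega)) (fun i _ _ => hg0 i)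
  have hsum2 : ∑ l ∈ Finset.Icc 1 (M-1), g l
      = ht * ∑ l ∈ Finset.Icc 1 (M-1),
          Real.sqrt ⟪Ai (ht⁻¹ • (f l - f (l-1))), ht⁻¹ • (f l - f (l-1))⟫ := by
    rw [Finset.mul_sum]
    exact Finset.sum_congr rfl (fun l _ => hgl l)
  have hEm : E m = ⟪B (ht⁻¹ • (v m - v (m-1))), ht⁻¹ • (v m - v (m-1))⟫
      + (σ - 1/4) * ht^2 * ⟪A (ht⁻¹ • (v m - v (m-1))), ht⁻¹ • (v m - v (m-1))⟫
      + ⟪A ((1/2 : ℝ) • (v (m-1) + v m)), (1/2 : ℝ) • (v (m-1) + v m)⟫ := by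
    simp only [hEdef, hwdef, hsdef]
  rw [← hEm]
  calc Real.sqrt (E m) ≤ R + 3*K + 2 * ∑ l ∈ Finset.Icc 2 (m-1), g l := hGm
  _ ≤ R + 3*K + 2 * ∑ l ∈ Finset.Icc 1 (M-1), g l := by linarith
  _ = R + 2 * ht * (∑ l ∈ Finset.Icc 1 (M-1),
        Real.sqrt ⟪Ai (ht⁻¹ • (f l - f (l-1))), ht⁻¹ • (f l - f (l-1))⟫) + 3 * K := by
      rw [hsum2]; ring
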